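/- arXiv:2106.14810 — 3 statements merged into one kernel-verified Lean document; each statement's English description precedes it below -/
import Mathlib

section
/- For every natural number n there exists a constant C_n > 0 such that the following holds: for every ε > 0, every Δ ∈ (0, 1], and all r, r' ∈ ℝ³ with ‖r'‖ = 1, ‖r‖ ≤ 2, ‖r‖ ≥ Δ and ‖r − r'‖ ≥ Δ, the perturbing function 𝓗_P : x ↦ −ε/‖x − r'‖ + ε/‖x‖ + ε·⟨x, r'⟩ satisfies ‖Dⁿ𝓗_P(r)‖ ≤ C_n·ε/Δ^{n+1}, where Dⁿ𝓗_P(r) is the n-th iterated Fréchet derivative at r; in particular for n = 0, |𝓗_P(r)| ≤ C₀·ε/Δ. -/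
open Filter Set

private lemma shift_lemma {E F : Type*} [NormedAddCommGroup E] [NormedSpace ℝ E]
    [NormedAddCommGroup F] [NormedSpace ℝ F]
    (n : ℕ) {s : Set E} (hs : IsOpen s) {f : E → F} (hf : ContDiffOn ℝ (n+1 : ℕ) f s) (c : E) :
    ∀ x, x + c ∈ s → iteratedFDeriv ℝ n (fun y => f (y + c)) x = iteratedFDeriv ℝ n f (x + c) := by
  induction n with
  | zero => intro x hx; ext m; simp
  | succ n IH =>
    intro x hx
    have hf' : ContDiffOn ℝ (n+1 : ℕ) f s := hf.of_le (by exact_mod_cast Nat.le_succ (n+1))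
    have IH' := IH hf'
    have hs' : IsOpen ((fun y : E => y + c) ⁻¹' s) :=
      hs.preimage (continuous_id.add continuous_const)
    have hx' : x ∈ (fun y : E => y + c) ⁻¹' s := hx
    have h1 : fderiv ℝ (iteratedFDeriv ℝ n (fun y => f (y + c))) x
        = fderiv ℝ ((iteratedFDeriv ℝ n f) ∘ (fun y => y + c)) x := by
      apply Filter.EventuallyEq.fderiv_eq
      filter_upwards [hs'.mem_nhds hx'] with y hy
      exact IH' y hy
    have h2 : DifferentiableAt ℝ (iteratedFDeriv ℝ n f) (x + c) := by
      have hd : DifferentiableOn ℝ (iteratedFDerivWithin ℝ n f s) s :=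
        hf.differentiableOn_iteratedFDerivWithin
          (by exact_mod_cast Nat.lt_succ_of_lt (Nat.lt_succ_self n)) hs.uniqueDiffOn
      have hda := (hd (x + c) hx).differentiableAt (hs.mem_nhds hx)
      apply hda.congr_of_eventuallyEq
      filter_upwards [hs.mem_nhds hx] with y hy
      exact (iteratedFDerivWithin_of_isOpen n hs hy).symm
    have h3 : HasFDerivAt ((iteratedFDeriv ℝ n f) ∘ (fun y => y + c))
        (fderiv ℝ (iteratedFDeriv ℝ n f) (x + c)) x := by
      have := (h2.hasFDerivAt).comp x ((hasFDerivAt_id x).add_const c)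
      simpa using this
    rw [iteratedFDeriv_succ_eq_comp_left, iteratedFDeriv_succ_eq_comp_left]
    simp only [Function.comp_apply]
    rw [h1, h3.fderiv]

private lemma key_bound (n : ℕ) :
    ∃ M : ℝ, 0 < M ∧ ∀ (Δ : ℝ) (x : EuclideanSpace ℝ (Fin 3)), 0 < Δ → Δ ≤ ‖x‖ →
      ‖iteratedFDeriv ℝ n (fun y : EuclideanSpace ℝ (Fin 3) => ‖y‖⁻¹) x‖ ≤ M / Δ ^ (n + 1) := by
  set E := EuclideanSpace ℝ (Fin 3)
  set g : E → ℝ := fun y => ‖y‖⁻¹ with hgdef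
  set s : Set E := {y | y ≠ 0} with hsdef
  have hs : IsOpen s := isOpen_ne
  have hgs : ∀ m : WithTop ℕ∞, ContDiffOn ℝ m g s := by
    intro m x hx
    exact (((contDiffAt_id).norm ℝ hx).inv (norm_ne_zero_iff.2 hx)).contDiffWithinAt
  have hcont : ContinuousOn (fun x => ‖iteratedFDerivWithin ℝ n g s x‖) s :=
    ((hgs (n+1 : ℕ)).continuousOn_iteratedFDerivWithin (by exact_mod_cast Nat.le_succ n)
      hs.uniqueDiffOn).norm
  have hKs : Metric.sphere (0:E) 1 ⊆ s := by
    intro u hu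
    simp only [Metric.mem_sphere, dist_zero_right] at hu
    simp only [hsdef, mem_setOf_eq]
    intro h0; rw [h0] at hu; simp at hu
  obtain ⟨u₀, hu₀K, hmax⟩ := (isCompact_sphere (0:E) 1).exists_isMaxOn
    (NormedSpace.sphere_nonempty.mpr zero_le_one) (hcont.mono hKs)
  set M₀ : ℝ := ‖iteratedFDerivWithin ℝ n g s u₀‖ with hM₀
  refine ⟨M₀ + 1, by positivity, ?_⟩
  intro Δ x hΔ hΔx
  have hlampos : 0 < ‖x‖ := lt_of_lt_of_le hΔ hΔx
  set lam : ℝ := ‖x‖ with hlam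
  have hxs : x ∈ s := by simp only [hsdef, mem_setOf_eq]; exact norm_pos_iff.mp hlampos
  set u : E := lam⁻¹ • x with hu
  have hunorm : ‖u‖ = 1 := by
    rw [hu, norm_smul, norm_inv, norm_norm, ← hlam, inv_mul_cancel₀ hlampos.ne']
  have hus : u ∈ s := by
    simp only [hsdef, mem_setOf_eq]
    intro h0; rw [h0] at hunorm; simp at hunorm
  set e : E ≃L[ℝ] E := (LinearEquiv.smulOfNeZero ℝ E lam hlampos.ne').toContinuousLinearEquiv with he
  have heapp : ∀ y : E, e y = lam • y := fun y => rfl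
  have heu : e u = x := by
    rw [heapp, hu, smul_smul, mul_inv_cancel₀ hlampos.ne', one_smul]
  have hpre : (e : E → E) ⁻¹' s = s := by
    ext y
    simp only [mem_preimage, hsdef, mem_setOf_eq, heapp]
    constructor
    · intro h h0; exact h (by rw [h0, smul_zero])
    · intro h h0
      rcases smul_eq_zero.mp h0 with h1 | h1
      · exact hlampos.ne' h1
      · exact h h1
  have A := e.iteratedFDerivWithin_comp_right g hs.uniqueDiffOn (heu ▸ hxs) n
  rw [hpre, heu] at A
  have hge : (g ∘ e) = lam⁻¹ • g := by
    funext y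
    simp only [Function.comp_apply, heapp, hgdef, Pi.smul_apply, smul_eq_mul, norm_smul,
      Real.norm_eq_abs, abs_of_pos hlampos, mul_inv]
  rw [hge, iteratedFDerivWithin_const_smul_apply ((hgs (n : ℕ)) u hus) hs.uniqueDiffOn hus] at A
  -- A : lam⁻¹ • T_u = T_x.compContinuousLinearMap (fun _ => e)
  set Tu := iteratedFDerivWithin ℝ n g s u
  set Tx := iteratedFDerivWithin ℝ n g s x
  have hTx : Tx = ((lam ^ n)⁻¹ * lam⁻¹) • Tu := by
    ext m
    have hA := congrFun (congrArg DFunLike.coe A) m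
    simp only [ContinuousMultilinearMap.smul_apply,
      ContinuousMultilinearMap.compContinuousLinearMap_apply] at hA
    simp only [ContinuousLinearEquiv.coe_coe] at hA
    have h2 : (Tx fun i => e (m i)) = lam ^ n • Tx m := by
      have := Tx.map_smul_univ (fun _ => lam) m
      simp only [Finset.prod_const, Finset.card_univ, Fintype.card_fin] at this
      simp only [heapp]
      exact this
    rw [h2] at hA
    have hA' : lam⁻¹ * Tu m = lam ^ n * Tx m := by simpa [smul_eq_mul] using hA
    simp only [ContinuousMultilinearMap.smul_apply, smul_eq_mul]
    rw [mul_assoc, hA', ← mul_assoc, inv_mul_cancel₀ (pow_ne_zero n hlampos.ne'), one_mul]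
  have hTxnorm : ‖Tx‖ ≤ M₀ / lam ^ (n + 1) := by
    rw [hTx, norm_smul]
    have h1 : ‖Tu‖ ≤ M₀ := hmax (by simp [hunorm])
    have h2 : ‖(lam ^ n)⁻¹ * lam⁻¹‖ = (lam ^ (n+1))⁻¹ := by
      rw [Real.norm_eq_abs, abs_mul, abs_inv, abs_inv, abs_pow, abs_of_pos hlampos,
        pow_succ, mul_inv]
    rw [h2, div_eq_inv_mul]
    exact mul_le_mul_of_nonneg_left h1 (by positivity)
  have hfinal : ‖iteratedFDeriv ℝ n g x‖ ≤ M₀ / lam ^ (n+1) := by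
    rw [← iteratedFDerivWithin_of_isOpen n hs hxs]
    exact hTxnorm
  refine hfinal.trans ?_
  apply div_le_div₀ (by positivity) (by linarith) (by positivity)
  exact pow_le_pow_left₀ hΔ.le hΔx _
open Filter Set

private lemma clm_bound (n : ℕ) (L : EuclideanSpace ℝ (Fin 3) →L[ℝ] ℝ)
    (x : EuclideanSpace ℝ (Fin 3)) (hx : ‖x‖ ≤ 2) (hL : ‖L‖ ≤ 1) :
    ‖iteratedFDeriv ℝ n (fun y => L y) x‖ ≤ 2 := by
  match n with
  | 0 =>
    rw [norm_iteratedFDeriv_zero]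
    calc ‖L x‖ ≤ ‖L‖ * ‖x‖ := L.le_opNorm x
    _ ≤ 1 * 2 := mul_le_mul hL hx (norm_nonneg x) zero_le_one
    _ = 2 := by norm_num
  | 1 =>
    apply ContinuousMultilinearMap.opNorm_le_bound (by norm_num) (fun m => ?_)
    rw [iteratedFDeriv_one_apply, L.fderiv]
    calc ‖L (m 0)‖ ≤ ‖L‖ * ‖m 0‖ := L.le_opNorm _
    _ ≤ 2 * ∏ i, ‖m i‖ := by
        rw [show (∏ i, ‖m i‖) = ‖m 0‖ by simp]
        exact mul_le_mul (hL.trans one_le_two) le_rfl (norm_nonneg _) (by norm_num)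
  | (k+2) =>
    have hzero : iteratedFDeriv ℝ (k+2) (fun y => L y) x = 0 := by
      ext m
      rw [iteratedFDeriv_succ_apply_right]
      have hc : (fun y => fderiv ℝ (fun z => L z) y) = fun _ => L := funext fun y => L.fderiv
      rw [hc, iteratedFDeriv_const_of_ne (Nat.succ_ne_zero k)]
      simp
    rw [hzero]
    simp
local notation "E3" => EuclideanSpace ℝ (Fin 3)


/-- Lemma 1 of the paper, estimate on the perturbing function: for every `n` there is a
constant `Cₙ > 0` such that for all `ε > 0`, `Δ ∈ (0,1]`, and positions `r, r' ∈ ℝ³` with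
`‖r'‖ = 1`, `‖r‖ ≤ 2`, `‖r‖ ≥ Δ`, `‖r - r'‖ ≥ Δ`, the perturbation
`𝓗_P(x) = -ε/‖x - r'‖ + ε/‖x‖ + ε⟨x, r'⟩` satisfies `‖Dⁿ𝓗_P(r)‖ ≤ Cₙ ε/Δ^{n+1}`;
in particular for `n = 0`, `|𝓗_P(r)| ≤ C₀ ε/Δ`. -/
theorem perturbation_iteratedFDeriv_bound (n : ℕ) :
    ∃ C : ℝ, 0 < C ∧ ∀ (ε Δ : ℝ), 0 < ε → 0 < Δ → Δ ≤ 1 →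
      ∀ r r' : EuclideanSpace ℝ (Fin 3), ‖r'‖ = 1 → ‖r‖ ≤ 2 → Δ ≤ ‖r‖ → Δ ≤ ‖r - r'‖ →
        ‖iteratedFDeriv ℝ n
            (fun x : EuclideanSpace ℝ (Fin 3) =>
              -ε / ‖x - r'‖ + ε / ‖x‖ + ε * (inner ℝ x r' : ℝ)) r‖ ≤ C * ε / Δ ^ (n + 1) ∧
        (n = 0 → |(-ε / ‖r - r'‖ + ε / ‖r‖ + ε * (inner ℝ r r' : ℝ))| ≤ C * ε / Δ) := by
  obtain ⟨M, hM0, hM⟩ := key_bound n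
  refine ⟨2 * M + 2, by positivity, ?_⟩
  intro ε Δ hε hΔ hΔ1 r r' hr' hr2 hrΔ hrr'Δ
  have main : ‖iteratedFDeriv ℝ n
      (fun x : EuclideanSpace ℝ (Fin 3) =>
        -ε / ‖x - r'‖ + ε / ‖x‖ + ε * (inner ℝ x r' : ℝ)) r‖ ≤ (2 * M + 2) * ε / Δ ^ (n + 1) := by
    set g : E3 → ℝ := fun y => ‖y‖⁻¹ with hgdef
    set L : E3 →L[ℝ] ℝ := innerSL ℝ r' with hLdef
    have hr0 : r ≠ 0 := norm_pos_iff.mp (hΔ.trans_le hrΔ)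
    have hrr0 : r - r' ≠ 0 := norm_pos_iff.mp (hΔ.trans_le hrr'Δ)
    set U : Set E3 := {x | x ≠ 0} ∩ {x | x - r' ≠ 0} with hUdef
    have hUopen : IsOpen U := by
      apply IsOpen.inter isOpen_ne
      have : {x : E3 | x - r' ≠ 0} = (fun x : E3 => x - r') ⁻¹' {y : E3 | y ≠ 0} := rfl
      rw [this]
      exact IsOpen.preimage (continuous_id.sub continuous_const) isOpen_ne
    have hrU : r ∈ U := ⟨hr0, hrr0⟩
    have hFeq : (fun x : E3 => -ε / ‖x - r'‖ + ε / ‖x‖ + ε * (inner ℝ x r' : ℝ))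
        = fun x => (((-ε) • fun y : E3 => g (y - r')) x + (ε • g) x)
            + (ε • fun y : E3 => L y) x := by
      funext x
      simp only [Pi.smul_apply, smul_eq_mul, hgdef, hLdef, innerSL_apply_apply, div_eq_mul_inv]
      rw [real_inner_comm]
    rw [hFeq]
    have hgsub : ContDiffOn ℝ n (fun y : E3 => g (y - r')) U := fun x hx =>
      (((contDiffAt_id.sub contDiffAt_const).norm ℝ hx.2).inv
        (norm_ne_zero_iff.2 hx.2)).contDiffWithinAt
    have hgU : ContDiffOn ℝ n g U := fun x hx =>
      ((contDiffAt_id.norm ℝ hx.1).inv (norm_ne_zero_iff.2 hx.1)).contDiffWithinAt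
    have c1 : ContDiffOn ℝ n ((-ε) • fun y : E3 => g (y - r')) U := by exact hgsub.const_smul (-ε)
    have c2 : ContDiffOn ℝ n (ε • g) U := by exact hgU.const_smul ε
    have c3 : ContDiffOn ℝ n (ε • fun y : E3 => L y) U := by exact (L.contDiff.const_smul ε).contDiffOn
    have split : iteratedFDeriv ℝ n
        (fun x => (((-ε) • fun y : E3 => g (y - r')) x + (ε • g) x)
            + (ε • fun y : E3 => L y) x) r
        = iteratedFDeriv ℝ n ((-ε) • fun y : E3 => g (y - r')) r
          + iteratedFDeriv ℝ n (ε • g) r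
          + iteratedFDeriv ℝ n (ε • fun y : E3 => L y) r := by
      rw [← iteratedFDerivWithin_of_isOpen n hUopen hrU,
        iteratedFDerivWithin_add_apply' ((c1.add c2) r hrU) (c3 r hrU) hUopen.uniqueDiffOn hrU,
        iteratedFDerivWithin_add_apply' (c1 r hrU) (c2 r hrU) hUopen.uniqueDiffOn hrU,
        iteratedFDerivWithin_of_isOpen n hUopen hrU,
        iteratedFDerivWithin_of_isOpen n hUopen hrU,
        iteratedFDerivWithin_of_isOpen n hUopen hrU]
    rw [split]
    have B1 : ‖iteratedFDeriv ℝ n ((-ε) • fun y : E3 => g (y - r')) r‖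
        ≤ ε * (M / Δ ^ (n + 1)) := by
      have e1 : iteratedFDeriv ℝ n ((-ε) • fun y : E3 => g (y - r')) r
          = (-ε) • iteratedFDeriv ℝ n (fun y : E3 => g (y - r')) r := by
        rw [← iteratedFDerivWithin_of_isOpen n hUopen hrU,
          iteratedFDerivWithin_const_smul_apply (hgsub r hrU) hUopen.uniqueDiffOn hrU,
          iteratedFDerivWithin_of_isOpen n hUopen hrU]
      have hgss : ContDiffOn ℝ (n + 1 : ℕ) g {y : E3 | y ≠ 0} := fun x hx =>
        ((contDiffAt_id.norm ℝ hx).inv (norm_ne_zero_iff.2 hx)).contDiffWithinAt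
      have e2 : iteratedFDeriv ℝ n (fun y : E3 => g (y - r')) r
          = iteratedFDeriv ℝ n g (r - r') := by
        have := shift_lemma n isOpen_ne hgss (-r') r (by simpa [sub_eq_add_neg] using hrr0)
        simpa [sub_eq_add_neg] using this
      rw [e1, norm_smul, e2, Real.norm_eq_abs, abs_neg, abs_of_pos hε]
      exact mul_le_mul_of_nonneg_left (hM Δ (r - r') hΔ hrr'Δ) hε.le
    have B2 : ‖iteratedFDeriv ℝ n (ε • g) r‖ ≤ ε * (M / Δ ^ (n + 1)) := by
      have e1 : iteratedFDeriv ℝ n (ε • g) r = ε • iteratedFDeriv ℝ n g r := by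
        rw [← iteratedFDerivWithin_of_isOpen n hUopen hrU,
          iteratedFDerivWithin_const_smul_apply (hgU r hrU) hUopen.uniqueDiffOn hrU,
          iteratedFDerivWithin_of_isOpen n hUopen hrU]
      rw [e1, norm_smul, Real.norm_eq_abs, abs_of_pos hε]
      exact mul_le_mul_of_nonneg_left (hM Δ r hΔ hrΔ) hε.le
    have B3 : ‖iteratedFDeriv ℝ n (ε • fun y : E3 => L y) r‖ ≤ ε * 2 := by
      have e1 : iteratedFDeriv ℝ n (ε • fun y : E3 => L y) r
          = ε • iteratedFDeriv ℝ n (fun y : E3 => L y) r :=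
        iteratedFDeriv_const_smul_apply L.contDiff.contDiffAt
      have hLnorm : ‖L‖ ≤ 1 := by rw [hLdef, innerSL_apply_norm, hr']
      rw [e1, norm_smul, Real.norm_eq_abs, abs_of_pos hε]
      exact mul_le_mul_of_nonneg_left (clm_bound n L r hr2 hLnorm) hε.le
    refine (norm_add₃_le.trans (add_le_add (add_le_add B1 B2) B3)).trans ?_
    have hpowpos : 0 < Δ ^ (n + 1) := by positivity
    have hpow1 : Δ ^ (n + 1) ≤ 1 := pow_le_one₀ hΔ.le hΔ1
    have h2 : ε * 2 ≤ 2 * ε / Δ ^ (n + 1) := by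
      rw [le_div_iff₀ hpowpos]
      nlinarith
    have heq : (2 * M + 2) * ε / Δ ^ (n + 1)
        = ε * (M / Δ ^ (n + 1)) + ε * (M / Δ ^ (n + 1)) + 2 * ε / Δ ^ (n + 1) := by
      field_simp
      ring
    rw [heq]
    exact add_le_add le_rfl h2
  refine ⟨main, ?_⟩
  intro hn
  subst hn
  have h := main
  rw [norm_iteratedFDeriv_zero, Real.norm_eq_abs] at h
  simpa using h
end

section
/- Let g : ℝ → ℝ be continuous, 2π-periodic, with ∫₀^{2π} g(s) ds = 0, and define S(λ) = (1/(2π))·∫₀^{2π} s·g(λ + s) ds. Then S is 2π-periodic, differentiable, S'(λ) = g(λ) for every λ ∈ ℝ, and sup_{λ∈ℝ} |S(λ)| ≤ π·sup_{λ∈ℝ} |g(λ)|. -/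
open Real

/-- Construction of the generating function of the averaging transformation: if `g` is
continuous, `2π`-periodic with zero mean, then `S(λ) = (1/2π)∫₀^{2π} s·g(λ+s) ds` is
`2π`-periodic, differentiable with `S' = g`, and `sup |S| ≤ π·sup |g|`. -/
theorem generating_function_of_averaging (g : ℝ → ℝ) (hg : Continuous g)
    (hper : Function.Periodic g (2 * π))
    (hmean : (∫ s in (0 : ℝ)..(2 * π), g s) = 0)
    (S : ℝ → ℝ)
    (hS : ∀ l : ℝ, S l = (1 / (2 * π)) * ∫ s in (0 : ℝ)..(2 * π), s * g (l + s)) :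
    Function.Periodic S (2 * π) ∧
    (∀ l : ℝ, HasDerivAt S (g l) l) ∧
    (∀ l : ℝ, |S l| ≤ π * ⨆ t : ℝ, |g t|) := by
  have hπ : (0:ℝ) < 2 * π := by positivity
  have h2π : (2 * π : ℝ) ≠ 0 := ne_of_gt hπ
  -- alternative representation
  have key : ∀ l : ℝ, S l = (1 / (2 * π)) * ∫ u in l..(l + 2 * π), u * g u := by
    intro l
    rw [hS l]
    congr 1
    have h1 : (∫ s in (0:ℝ)..(2*π), s * g (l + s))
        = ∫ u in (0 + l)..(2*π + l), (u - l) * g u := by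
      rw [← intervalIntegral.integral_comp_add_right (fun u => (u - l) * g u) l]
      apply intervalIntegral.integral_congr
      intro s _
      show s * g (l + s) = (s + l - l) * g (s + l)
      rw [add_sub_cancel_right, add_comm]
    have hzero : (∫ u in l..(l + 2*π), g u) = 0 := by
      rw [hper.intervalIntegral_add_eq l 0, zero_add, hmean]
    have h2 : (∫ u in l..(l + 2*π), (u - l) * g u)
        = (∫ u in l..(l + 2*π), u * g u) - l * ∫ u in l..(l + 2*π), g u := by
      rw [← intervalIntegral.integral_const_mul, ← intervalIntegral.integral_sub]
      · congr 1; ext u; ring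
      · exact (continuous_id.mul hg).intervalIntegrable _ _
      · exact (continuous_const.mul hg).intervalIntegrable _ _
    rw [h1, zero_add, add_comm (2*π) l, h2, hzero]
    ring
  -- periodicity
  have hperS : Function.Periodic S (2 * π) := by
    intro l
    rw [hS, hS]
    congr 1
    apply intervalIntegral.integral_congr
    intro s _
    show s * g (l + 2 * π + s) = s * g (l + s)
    rw [show l + 2 * π + s = l + s + 2 * π by ring, hper (l + s)]
  refine ⟨hperS, ?_, ?_⟩
  · -- derivative
    intro l
    have hSfun : S = fun x => (1 / (2 * π)) *
        ((∫ u in (0:ℝ)..(x + 2*π), u * g u) - ∫ u in (0:ℝ)..x, u * g u) := by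
      funext x
      rw [key x, intervalIntegral.integral_interval_sub_left]
      · exact (continuous_id.mul hg).intervalIntegrable _ _
      · exact (continuous_id.mul hg).intervalIntegrable _ _
    rw [hSfun]
    have hF : ∀ x : ℝ, HasDerivAt (fun y => ∫ u in (0:ℝ)..y, u * g u) (x * g x) x := by
      intro x
      exact intervalIntegral.integral_hasDerivAt_right
        ((continuous_id.mul hg).intervalIntegrable _ _)
        (continuous_id.mul hg).aestronglyMeasurable.stronglyMeasurableAtFilter
        (continuous_id.mul hg).continuousAt
    have h1 : HasDerivAt (fun x : ℝ => ∫ u in (0:ℝ)..(x + 2*π), u * g u)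
        ((l + 2*π) * g (l + 2*π)) l := by
      have := (hF (l + 2*π)).comp l ((hasDerivAt_id l).add_const (2*π))
      simpa [Function.comp_def] using this
    have h2 := (h1.sub (hF l)).const_mul (1 / (2 * π))
    have heq : (1 / (2 * π)) * ((l + 2*π) * g (l + 2*π) - l * g l) = g l := by
      rw [hper l]
      field_simp
      ring
    rw [heq] at h2
    exact h2
  · -- bound
    intro l
    set M := ⨆ t : ℝ, |g t| with hM
    have hbdd : BddAbove (Set.range fun t => |g t|) := by
      have hper' : Function.Periodic (fun t => |g t|) (2 * π) := fun t => by simp [hper t]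
      rw [← hper'.image_uIcc h2π 0]
      exact (isCompact_uIcc.image (hg.abs)).bddAbove
    have hle : ∀ t, |g t| ≤ M := fun t => le_ciSup hbdd t
    have hM0 : 0 ≤ M := le_trans (abs_nonneg _) (hle 0)
    rw [hS l, abs_mul, abs_of_pos (by positivity : (0:ℝ) < 1 / (2*π))]
    have habs : |∫ s in (0:ℝ)..(2*π), s * g (l + s)| ≤ ∫ s in (0:ℝ)..(2*π), |s * g (l + s)| :=
      intervalIntegral.abs_integral_le_integral_abs hπ.le
    have hmono : (∫ s in (0:ℝ)..(2*π), |s * g (l + s)|) ≤ ∫ s in (0:ℝ)..(2*π), s * M := by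
      apply intervalIntegral.integral_mono_on hπ.le
      · exact ((continuous_id.mul (hg.comp (continuous_const.add continuous_id))).abs).intervalIntegrable _ _
      · exact (continuous_id.mul continuous_const).intervalIntegrable _ _
      · intro s hs
        rw [abs_mul, abs_of_nonneg hs.1]
        exact mul_le_mul_of_nonneg_left (hle (l + s)) hs.1
    have hval : (∫ s in (0:ℝ)..(2*π), s * M) = 2 * π ^ 2 * M := by
      rw [intervalIntegral.integral_mul_const, integral_id]
      ring
    calc (1 / (2*π)) * |∫ s in (0:ℝ)..(2*π), s * g (l + s)|
        ≤ (1 / (2*π)) * (2 * π ^ 2 * M) := by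
          apply mul_le_mul_of_nonneg_left _ (by positivity)
          rw [← hval]; exact habs.trans hmono
      _ = π * M := by field_simp
end

section
/- Fix ε ∈ ℝ and σ ∈ {π/3, −π/3}. Let r'(t) = (cos t, sin t) ∈ ℝ² and r(t) = (cos(t + σ), sin(t + σ)) ∈ ℝ². Then r is a solution of the heliocentric equation of motion, i.e., r̈(t) = −(1−ε)·r(t)/‖r(t)‖³ − ε·(r(t) − r'(t))/‖r(t) − r'(t)‖³ − ε·r'(t)/‖r'(t)‖³ for all t ∈ ℝ. (In the synodic reference frame these are the Lagrange equilibria L₄ and L₅, at which the particle lies at the vertex of an equilateral triangle formed with the Sun and the planet, φ = ±60° and R = 1.) -/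
open Real

/-- The point of the Euclidean plane with coordinates `(x, y)`. -/
noncomputable def toE2 (x y : ℝ) : EuclideanSpace ℝ (Fin 2) :=
  (WithLp.equiv 2 (Fin 2 → ℝ)).symm ![x, y]

lemma toE2_apply0 (x y : ℝ) : toE2 x y 0 = x := rfl
lemma toE2_apply1 (x y : ℝ) : toE2 x y 1 = y := rfl

lemma toE2_smul_add (x y : ℝ) : toE2 x y = x • toE2 1 0 + y • toE2 0 1 := by
  ext i
  fin_cases i <;>
    simp [toE2, WithLp.equiv_symm_apply, PiLp.add_apply, PiLp.sub_apply, PiLp.neg_apply, PiLp.smul_apply]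

lemma toE2_sub (a b c d : ℝ) : toE2 a b - toE2 c d = toE2 (a - c) (b - d) := by
  ext i; fin_cases i <;> simp [toE2, WithLp.equiv_symm_apply, PiLp.add_apply, PiLp.sub_apply, PiLp.neg_apply, PiLp.smul_apply]

lemma toE2_neg (a b : ℝ) : -toE2 a b = toE2 (-a) (-b) := by
  ext i; fin_cases i <;> simp [toE2, WithLp.equiv_symm_apply, PiLp.add_apply, PiLp.sub_apply, PiLp.neg_apply, PiLp.smul_apply]

lemma norm_toE2 (x y : ℝ) : ‖toE2 x y‖ = Real.sqrt (x ^ 2 + y ^ 2) := by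
  rw [EuclideanSpace.norm_eq]
  congr 1
  rw [Fin.sum_univ_two]
  simp [toE2_apply0, toE2_apply1, sq_abs]

lemma hasDerivAt_toE2 {f g : ℝ → ℝ} {f' g' : ℝ} {t : ℝ}
    (hf : HasDerivAt f f' t) (hg : HasDerivAt g g' t) :
    HasDerivAt (fun s => toE2 (f s) (g s)) (toE2 f' g') t := by
  have h := (hf.smul_const (toE2 1 0)).add (hg.smul_const (toE2 0 1))
  simpa [← toE2_smul_add, Pi.add_def] using h

/-- The Lagrange equilateral configurations `L₄` and `L₅`: the particle
`r(t) = (cos(t+σ), sin(t+σ))` with `σ = ±π/3` solves the heliocentric equation of motion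
of the planar circular restricted three-body problem with planet
`r'(t) = (cos t, sin t)` and mass parameter `ε`. -/
theorem lagrange_equilateral_solution (ε σ : ℝ) (hσ : σ = π / 3 ∨ σ = -(π / 3))
    (r rp : ℝ → EuclideanSpace ℝ (Fin 2))
    (hrp : ∀ t, rp t = toE2 (cos t) (sin t))
    (hr : ∀ t, r t = toE2 (cos (t + σ)) (sin (t + σ))) :
    ∀ t : ℝ, deriv (deriv r) t =
      -((1 - ε) / ‖r t‖ ^ 3) • r t - (ε / ‖r t - rp t‖ ^ 3) • (r t - rp t)
        - (ε / ‖rp t‖ ^ 3) • rp t := by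
  intro t
  have hre : r = fun s => toE2 (cos (s + σ)) (sin (s + σ)) := funext hr
  -- first derivative
  have hd1 : ∀ s : ℝ, HasDerivAt r (toE2 (-sin (s + σ)) (cos (s + σ))) s := by
    intro s
    rw [hre]
    have hc : HasDerivAt (fun u : ℝ => cos (u + σ)) (-sin (s + σ)) s := by
      simpa [Function.comp_def] using (Real.hasDerivAt_cos (s + σ)).comp s
        ((hasDerivAt_id s).add_const σ)
    have hs : HasDerivAt (fun u : ℝ => sin (u + σ)) (cos (s + σ)) s := by
      simpa [Function.comp_def] using (Real.hasDerivAt_sin (s + σ)).comp s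
        ((hasDerivAt_id s).add_const σ)
    exact hasDerivAt_toE2 hc hs
  have hderiv1 : deriv r = fun s => toE2 (-sin (s + σ)) (cos (s + σ)) :=
    funext fun s => (hd1 s).deriv
  have hd2 : HasDerivAt (deriv r) (toE2 (-cos (t + σ)) (-sin (t + σ))) t := by
    rw [hderiv1]
    have hc : HasDerivAt (fun u : ℝ => -sin (u + σ)) (-cos (t + σ)) t := by
      have hs : HasDerivAt (fun u : ℝ => sin (u + σ)) (cos (t + σ)) t := by
        simpa [Function.comp_def] using (Real.hasDerivAt_sin (t + σ)).comp t
          ((hasDerivAt_id t).add_const σ)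
      simpa [Pi.neg_def] using hs.neg
    have hs : HasDerivAt (fun u : ℝ => cos (u + σ)) (-sin (t + σ)) t := by
      simpa [Function.comp_def] using (Real.hasDerivAt_cos (t + σ)).comp t
        ((hasDerivAt_id t).add_const σ)
    exact hasDerivAt_toE2 hc hs
  have hdd : deriv (deriv r) t = -(r t) := by
    rw [hd2.deriv, hr t, toE2_neg]
  -- norms
  have hnr : ‖r t‖ = 1 := by
    rw [hr t, norm_toE2, cos_sq_add_sin_sq, Real.sqrt_one]
  have hnrp : ‖rp t‖ = 1 := by
    rw [hrp t, norm_toE2]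
    rw [cos_sq_add_sin_sq, Real.sqrt_one]
  have hcosσ : cos σ = 1 / 2 := by
    rcases hσ with h | h <;> rw [h] <;> simp [Real.cos_pi_div_three]
  have hnsub : ‖r t - rp t‖ = 1 := by
    rw [hr t, hrp t, toE2_sub, norm_toE2]
    have hexp : (cos (t + σ) - cos t) ^ 2 + (sin (t + σ) - sin t) ^ 2 =
        2 - 2 * (cos (t + σ) * cos t + sin (t + σ) * sin t) := by
      have h1 := cos_sq_add_sin_sq (t + σ)
      have h2 := cos_sq_add_sin_sq t
      ring_nf
      nlinarith [h1, h2]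
    rw [hexp]
    have : cos (t + σ) * cos t + sin (t + σ) * sin t = cos σ := by
      rw [← Real.cos_sub]; ring_nf
    rw [this, hcosσ]
    norm_num
  rw [hdd, hnr, hnrp, hnsub]
  norm_num
  module
end
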